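/- For fixed positive integers m, r, n, there exists t (depending only on m, r, n) such that every increasing chain S₀ ⊆ S₁ ⊆ ⋯ ⊆ S_t of antichains of ℕ^m × Fin n with S_u ⊆ {(ξ,h) : |ξ| ≤ 2^u·r} is not strictly increasing, i.e., S_u = S_{u+1} for some u < t. -/

import Mathlib

/-- The height `|σ| = ∑_{i<m} σ(i)` of a multi-index. -/
def height {m : ℕ} (σ : Fin m → ℕ) : ℕ := ∑ i, σ i

/-- The product order on `ℕ^m × Fin n`: `(σ,k) ≤ (τ,ℓ)` iff `σ ≤ τ`
componentwise and `k = ℓ`. -/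
def prodLE {m n : ℕ} (p q : (Fin m → ℕ) × Fin n) : Prop :=
  p.1 ≤ q.1 ∧ p.2 = q.2

/-- The set of points of bounded height is finite. -/
lemma finite_height_le {m n B : ℕ} :
    {p : (Fin m → ℕ) × Fin n | height p.1 ≤ B}.Finite := by
  have h : {p : (Fin m → ℕ) × Fin n | height p.1 ≤ B} ⊆
      (Set.Iic (fun _ : Fin m => B)) ×ˢ (Set.univ : Set (Fin n)) := by
    rintro ⟨σ, k⟩ hp
    refine ⟨fun i => ?_, Set.mem_univ _⟩
    exact le_trans (Finset.single_le_sum (fun j _ => Nat.zero_le (σ j)) (Finset.mem_univ i)) hp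
  exact ((Set.finite_Iic _).prod Set.finite_univ).subset h

/-- A hand-rolled König's lemma: if a "goodness" predicate `G t f` on
sequences only depends on the first `t` values, is downward monotone in `t`,
forces the `u`-th value into a finite set `C u`, and good sequences of every
length exist, then there is a single sequence good of every length. -/
lemma koenig {X : Type*} [Nonempty X] (C : ℕ → Set X) (hfin : ∀ u, (C u).Finite)
    (G : ℕ → (ℕ → X) → Prop)
    (hmono : ∀ s t f, s ≤ t → G t f → G s f)
    (hloc : ∀ t f g, (∀ u < t, f u = g u) → G t f → G t g)
    (hmem : ∀ t f, G t f → ∀ u < t, f u ∈ C u)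
    (hex : ∀ t, ∃ f, G t f) :
    ∃ f, ∀ t, G t f := by
  classical
  -- `E k f`: the first `k` values of `f` extend to good sequences of every length
  set E : ℕ → (ℕ → X) → Prop := fun k f => ∀ t, ∃ g, G t g ∧ ∀ u < k, g u = f u with hE
  have step : ∀ k f, E k f → ∃ p, E (k + 1) (Function.update f k p) := by
    intro k f hEk
    -- choose witnesses
    choose g hg hgf using hEk
    -- values at position `k` lie in the finite set `C k`
    have hval : ∀ t : ℕ, g (k + 1 + t) k ∈ C k := fun t =>
      hmem _ _ (hg (k + 1 + t)) k (by omega)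
    haveI : Finite ↥(C k) := (hfin k).to_subtype
    obtain ⟨⟨p, hpC⟩, hfib⟩ :=
      Finite.exists_infinite_fiber (fun t : ℕ => (⟨g (k + 1 + t) k, hval t⟩ : ↥(C k)))
    have hfib' : {t : ℕ | g (k + 1 + t) k = p}.Infinite := by
      rw [← Set.infinite_coe_iff]
      refine Infinite.of_injective
        (fun x : ↥((fun t : ℕ => (⟨g (k + 1 + t) k, hval t⟩ : ↥(C k))) ⁻¹' {⟨p, hpC⟩}) =>
          (⟨x.1, (by exact congrArg Subtype.val x.2)⟩ :
            {t : ℕ | g (k + 1 + t) k = p})) ?_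
      intro a b hab
      simpa [Subtype.ext_iff] using hab
    refine ⟨p, fun t => ?_⟩
    obtain ⟨s, hs, hts⟩ := hfib'.exists_gt t
    refine ⟨g (k + 1 + s), hmono t (k + 1 + s) _ (by omega) (hg _), ?_⟩
    intro u hu
    rcases Nat.lt_succ_iff_lt_or_eq.1 hu with h | h
    · rw [hgf (k + 1 + s) u h, Function.update_of_ne (by omega)]
    · subst h
      rw [Function.update_self]
      exact hs
  -- base case
  have base : E 0 (fun _ => Classical.arbitrary X) := by
    intro t
    obtain ⟨g, hg⟩ := hex t
    exact ⟨g, hg, fun u hu => absurd hu (Nat.not_lt_zero u)⟩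
  -- iterate
  let F : (k : ℕ) → {f : ℕ → X // E k f} := fun k =>
    Nat.rec ⟨fun _ => Classical.arbitrary X, base⟩
      (fun k ih => ⟨Function.update ih.1 k (Classical.choose (step k ih.1 ih.2)),
        Classical.choose_spec (step k ih.1 ih.2)⟩) k
  have hFstab : ∀ u j, u < j → (F j).1 u = (F (u + 1)).1 u := by
    intro u j hj
    induction j with
    | zero => omega
    | succ j ih =>
      rcases Nat.lt_succ_iff_lt_or_eq.1 hj with h | h
      · have : (F (j + 1)).1 u = (F j).1 u := by
          show Function.update (F j).1 j _ u = (F j).1 u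
          exact Function.update_of_ne (by omega) _ _
        rw [this, ih h]
      · subst h; rfl
  refine ⟨fun u => (F (u + 1)).1 u, fun t => ?_⟩
  obtain ⟨g, hg, hgf⟩ := (F t).2 t
  refine hloc t g _ (fun u hu => ?_) hg
  rw [hgf u hu, hFstab u t hu]

theorem exists_stabilization_bound (m r n : ℕ) (hm : 0 < m) (hr : 0 < r) (hn : 0 < n) :
    ∃ t : ℕ, ∀ S : ℕ → Set ((Fin m → ℕ) × Fin n),
      (∀ u ≤ t, IsAntichain prodLE (S u)) →
      (∀ u, ∀ v, u ≤ v → v ≤ t → S u ⊆ S v) →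
      (∀ u ≤ t, S u ⊆ {p | height p.1 ≤ 2 ^ u * r}) →
      ∃ u < t, S u = S (u + 1) := by
  classical
  by_contra hcon
  push_neg at hcon
  haveI : Nonempty ((Fin m → ℕ) × Fin n) := ⟨(fun _ => 0, ⟨0, hn⟩)⟩
  -- goodness predicate: a bad sequence of length t
  set G : ℕ → (ℕ → (Fin m → ℕ) × Fin n) → Prop := fun t f =>
    (∀ u < t, height (f u).1 ≤ 2 ^ (u + 1) * r) ∧
    (∀ u < t, ∀ v < t, u ≠ v → ¬ prodLE (f u) (f v)) with hG
  -- good sequences of every length exist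
  have hex : ∀ t, ∃ f, G t f := by
    intro t
    obtain ⟨S, hanti, hincr, hbdd, hne⟩ := hcon t
    have hss : ∀ u < t, ∃ p, p ∈ S (u + 1) ∧ p ∉ S u := by
      intro u hu
      have hsub : S u ⊆ S (u + 1) := hincr u (u + 1) (by omega) (by omega)
      by_contra h
      push_neg at h
      exact hne u hu (Set.Subset.antisymm hsub (fun p hp => h p hp))
    choose x hx1 hx2 using hss
    refine ⟨fun u => if h : u < t then x u h else Classical.arbitrary _, ?_, ?_⟩
    · intro u hu
      simp only [dif_pos hu]
      exact hbdd (u + 1) (by omega) (hx1 u hu)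
    · intro u hu v hv huv
      simp only [dif_pos hu, dif_pos hv]
      -- wlog u < v by symmetry of membership argument
      have key : ∀ a (ha : a < t) b (hb : b < t), a < b →
          x a ha ∈ S (b + 1) ∧ x b hb ∈ S (b + 1) ∧ x a ha ≠ x b hb := by
        intro a ha b hb hab
        have h1 : x a ha ∈ S (b + 1) :=
          hincr (a + 1) (b + 1) (by omega) (by omega) (hx1 a ha)
        have h1' : x a ha ∈ S b := hincr (a + 1) b (by omega) (by omega) (hx1 a ha)
        refine ⟨h1, hx1 b hb, fun he => hx2 b hb (he ▸ h1')⟩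
      rcases Nat.lt_or_ge u v with h | h
      · obtain ⟨m1, m2, hne'⟩ := key u hu v hv h
        exact hanti (v + 1) (by omega) m1 m2 hne'
      · have h' : v < u := by omega
        obtain ⟨m1, m2, hne'⟩ := key v hv u hu h'
        exact hanti (u + 1) (by omega) m2 m1 (fun he => hne' he.symm)
  -- König: an infinite bad sequence
  obtain ⟨x, hx⟩ := koenig (fun u => {p | height p.1 ≤ 2 ^ (u + 1) * r})
    (fun u => finite_height_le) G
    (fun s t f hst hf => ⟨fun u hu => hf.1 u (by omega),
      fun u hu v hv => hf.2 u (by omega) v (by omega)⟩)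
    (fun t f g hfg hf => ⟨fun u hu => (hfg u hu) ▸ hf.1 u hu,
      fun u hu v hv => (hfg u hu) ▸ (hfg v hv) ▸ hf.2 u hu v hv⟩)
    (fun t f hf u hu => hf.1 u hu)
    hex
  have hinc : ∀ u v : ℕ, u ≠ v → ¬ prodLE (x u) (x v) := by
    intro u v huv
    exact (hx (max u v + 1)).2 u (by omega) v (by omega) huv
  -- pigeonhole on the color
  obtain ⟨c, hc⟩ := Finite.exists_infinite_fiber (fun u : ℕ => (x u).2)
  have hcinf : ((fun u : ℕ => (x u).2) ⁻¹' {c}).Infinite := Set.infinite_coe_iff.1 hc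
  let e := hcinf.natEmbedding
  -- Dickson's lemma on the first components
  haveI : IsWellOrder ℕ (· < ·) := inferInstance
  have hpwo : (Set.univ : Set (Fin m → ℕ)).IsPWO := Set.isPWO_of_wellQuasiOrderedLE _
  obtain ⟨i, j, hij, hle⟩ := hpwo.exists_lt (f := fun i => (x (e i).1).1) (fun i => Set.mem_univ _)
  have hne : (e i).1 ≠ (e j).1 := fun h => hij.ne (e.injective (Subtype.ext h))
  exact hinc _ _ hne ⟨hle, ((e i).2.trans (e j).2.symm : (x (e i).1).2 = (x (e j).1).2)⟩
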